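/- arXiv:1202.1359 — 2 statements merged into one kernel-verified Lean document; each statement's English description precedes it below -/
import Mathlib

section
/- Let S₁, S₂ be independent exponential random variables with rate μ > 0, and τ an independent exponential random variable with rate (2r-1)μ where r ≥ 2 is an integer. Then E[max(S₁, S₂ + τ)] = 1/μ + ((2r-1)/(2r-2))·(1/(2μ)) − 1/((2r-2)(2r-1)·2rμ). -/
open Real MeasureTheory Set Filter Topology

private lemma hasDerivAt_cexp (c b x : ℝ) :
    HasDerivAt (fun x : ℝ => c * exp (b * x)) (c * b * exp (b * x)) x := by
  have h : HasDerivAt (fun x : ℝ => b * x) b x := by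
    simpa using (hasDerivAt_id x).const_mul b
  have := h.exp.const_mul c
  convert this using 1
  all_goals first | rfl | ring

private lemma hasDerivAt_linexp (p q b x : ℝ) :
    HasDerivAt (fun x : ℝ => (p + q * x) * exp (b * x))
      ((q + b * (p + q * x)) * exp (b * x)) x := by
  have h1 : HasDerivAt (fun x : ℝ => p + q * x) q x := by
    simpa using ((hasDerivAt_id x).const_mul q).const_add p
  have h2 : HasDerivAt (fun x : ℝ => exp (b * x)) (b * exp (b * x)) x := by
    have h : HasDerivAt (fun x : ℝ => b * x) b x := by
      simpa using (hasDerivAt_id x).const_mul b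
    simpa [mul_comm] using h.exp
  have := h1.mul h2
  convert this using 1
  all_goals first | rfl | ring

private lemma tendsto_linexp (p q b : ℝ) (hb : 0 < b) :
    Tendsto (fun x : ℝ => (p + q * x) * exp (-b * x)) atTop (𝓝 0) := by
  have hbx : Tendsto (fun x : ℝ => b * x) atTop atTop :=
    (tendsto_const_mul_atTop_of_pos hb).mpr tendsto_id
  have h1 : Tendsto (fun x : ℝ => p * exp (-(b * x))) atTop (𝓝 0) := by
    have := (Real.tendsto_exp_neg_atTop_nhds_zero.comp hbx).const_mul p
    simpa [Function.comp] using this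
  have h2 : Tendsto (fun x : ℝ => (q / b) * ((b * x) * exp (-(b * x)))) atTop (𝓝 0) := by
    have h3 : Tendsto (fun y : ℝ => y * exp (-y)) atTop (𝓝 0) := by
      simpa using Real.tendsto_pow_mul_exp_neg_atTop_nhds_zero 1
    have := (h3.comp hbx).const_mul (q / b)
    simpa [Function.comp] using this
  have hb' : b ≠ 0 := ne_of_gt hb
  have h := h1.add h2
  rw [add_zero] at h
  refine h.congr fun x => ?_
  rw [neg_mul]
  field_simp

private lemma integrableOn_Ioi_linexp (b p q c : ℝ) (hb : 0 < b) (hc : 0 ≤ c)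
    (hp : 0 ≤ p) (hq : 0 ≤ q) :
    IntegrableOn (fun x : ℝ => (p + q * x) * exp (-b * x)) (Ioi c) := by
  have hb' : b ≠ 0 := ne_of_gt hb
  have hderiv : ∀ x ∈ Ici c,
      HasDerivAt (fun x : ℝ => (-(p / b + q / b ^ 2) + (-(q / b)) * x) * exp (-b * x))
        ((p + q * x) * exp (-b * x)) x := by
    intro x _
    have := hasDerivAt_linexp (-(p / b + q / b ^ 2)) (-(q / b)) (-b) x
    convert this using 1
    field_simp
    ring
  have hpos : ∀ x ∈ Ioi c, 0 ≤ (p + q * x) * exp (-b * x) := by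
    intro x hx
    have hx0 : 0 ≤ x := hc.trans (le_of_lt hx)
    exact mul_nonneg (add_nonneg hp (mul_nonneg hq hx0)) (exp_pos _).le
  exact integrableOn_Ioi_deriv_of_nonneg' hderiv hpos
    (tendsto_linexp (-(p / b + q / b ^ 2)) (-(q / b)) b hb)

private lemma integral_Ioi_linexp (b p q c : ℝ) (hb : 0 < b) (hc : 0 ≤ c)
    (hp : 0 ≤ p) (hq : 0 ≤ q) :
    ∫ x in Ioi c, (p + q * x) * exp (-b * x)
      = ((p + q * c) / b + q / b ^ 2) * exp (-b * c) := by
  have hb' : b ≠ 0 := ne_of_gt hb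
  have hderiv : ∀ x ∈ Ici c,
      HasDerivAt (fun x : ℝ => (-(p / b + q / b ^ 2) + (-(q / b)) * x) * exp (-b * x))
        ((p + q * x) * exp (-b * x)) x := by
    intro x _
    have := hasDerivAt_linexp (-(p / b + q / b ^ 2)) (-(q / b)) (-b) x
    convert this using 1
    field_simp
    ring
  have hpos : ∀ x ∈ Ioi c, 0 ≤ (p + q * x) * exp (-b * x) := by
    intro x hx
    have hx0 : 0 ≤ x := hc.trans (le_of_lt hx)
    exact mul_nonneg (add_nonneg hp (mul_nonneg hq hx0)) (exp_pos _).le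
  rw [integral_Ioi_of_hasDerivAt_of_nonneg' hderiv hpos
    (tendsto_linexp (-(p / b + q / b ^ 2)) (-(q / b)) b hb)]
  ring

private lemma inner_int (a : ℝ) (ha : 0 < a) (s₁ s₂ : ℝ) (hs₁ : 0 < s₁) (hs₂ : 0 < s₂) :
    ∫ τ in Ioi (0 : ℝ), max s₁ (s₂ + τ) * (a * exp (-a * τ)) =
      if s₂ < s₁ then s₁ + exp (-a * (s₁ - s₂)) / a else s₂ + 1 / a := by
  have ha' : a ≠ 0 := ne_of_gt ha
  by_cases h : s₂ < s₁
  · rw [if_pos h]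
    have hd : 0 < s₁ - s₂ := by linarith
    have hIoc : IntegrableOn (fun τ => max s₁ (s₂ + τ) * (a * exp (-a * τ)))
        (Ioc 0 (s₁ - s₂)) := by
      apply Continuous.integrableOn_Ioc
      fun_prop
    have hIoi : IntegrableOn (fun τ => max s₁ (s₂ + τ) * (a * exp (-a * τ)))
        (Ioi (s₁ - s₂)) := by
      apply (integrableOn_Ioi_linexp a (a * s₂) a (s₁ - s₂) ha hd.le
        (by positivity) ha.le).congr_fun _ measurableSet_Ioi
      intro τ hτ
      have hτ' : s₁ ≤ s₂ + τ := by have := hτ.out; linarith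
      simp only [max_eq_right hτ']
      ring
    rw [← Ioc_union_Ioi_eq_Ioi hd.le,
      setIntegral_union Ioc_disjoint_Ioi_same
        measurableSet_Ioi hIoc hIoi]
    have h1 : ∫ τ in Ioc (0 : ℝ) (s₁ - s₂), max s₁ (s₂ + τ) * (a * exp (-a * τ))
        = s₁ - s₁ * exp (-a * (s₁ - s₂)) := by
      have e : EqOn (fun τ => max s₁ (s₂ + τ) * (a * exp (-a * τ)))
          (fun τ => s₁ * (a * exp (-a * τ))) (Ioc 0 (s₁ - s₂)) := by
        intro τ hτ
        have : s₂ + τ ≤ s₁ := by have := hτ.2; linarith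
        simp only [max_eq_left this]
      rw [setIntegral_congr_fun measurableSet_Ioc e, ← intervalIntegral.integral_of_le hd.le]
      have hd' : ∀ x ∈ uIcc (0 : ℝ) (s₁ - s₂),
          HasDerivAt (fun τ : ℝ => (-s₁) * exp (-a * τ)) (s₁ * (a * exp (-a * x))) x := by
        intro x _
        have := hasDerivAt_cexp (-s₁) (-a) x
        convert this using 1
        ring
      rw [intervalIntegral.integral_eq_sub_of_hasDerivAt hd'
        ((by fun_prop : Continuous fun τ : ℝ => s₁ * (a * exp (-a * τ))).intervalIntegrable _ _)]
      simp only [mul_zero, Real.exp_zero]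
      ring
    have h2 : ∫ τ in Ioi (s₁ - s₂), max s₁ (s₂ + τ) * (a * exp (-a * τ))
        = ((a * s₂ + a * (s₁ - s₂)) / a + a / a ^ 2) * exp (-a * (s₁ - s₂)) := by
      have e : EqOn (fun τ => max s₁ (s₂ + τ) * (a * exp (-a * τ)))
          (fun τ => (a * s₂ + a * τ) * exp (-a * τ)) (Ioi (s₁ - s₂)) := by
        intro τ hτ
        have hτ' : s₁ ≤ s₂ + τ := by have := hτ.out; linarith
        simp only [max_eq_right hτ']
        ring
      rw [setIntegral_congr_fun measurableSet_Ioi e]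
      exact integral_Ioi_linexp a (a * s₂) a _ ha hd.le (by positivity) ha.le
    rw [h1, h2]
    field_simp
    ring
  · rw [if_neg h]
    push_neg at h
    have e : EqOn (fun τ => max s₁ (s₂ + τ) * (a * exp (-a * τ)))
        (fun τ => (a * s₂ + a * τ) * exp (-a * τ)) (Ioi (0 : ℝ)) := by
      intro τ hτ
      have hτ' : s₁ ≤ s₂ + τ := by have := hτ.out; linarith
      simp only [max_eq_right hτ']
      ring
    rw [setIntegral_congr_fun measurableSet_Ioi e,
      integral_Ioi_linexp a (a * s₂) a 0 ha le_rfl (by positivity) ha.le]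
    simp only [mul_zero, add_zero, Real.exp_zero, mul_one]
    field_simp

private lemma middle_int (μ a : ℝ) (hμ : 0 < μ) (hma : μ < a) (s₁ : ℝ) (hs₁ : 0 < s₁) :
    ∫ s₂ in Ioi (0 : ℝ),
        (if s₂ < s₁ then s₁ + exp (-a * (s₁ - s₂)) / a else s₂ + 1 / a) * (μ * exp (-μ * s₂))
      = s₁ + (1 / μ + 1 / a + μ / (a * (a - μ))) * exp (-μ * s₁)
          - μ / (a * (a - μ)) * exp (-a * s₁) := by
  have ha : 0 < a := hμ.trans hma
  have ha' : a ≠ 0 := ne_of_gt ha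
  have hμ' : μ ≠ 0 := ne_of_gt hμ
  have ham : 0 < a - μ := sub_pos.mpr hma
  have ham' : a - μ ≠ 0 := ne_of_gt ham
  set f : ℝ → ℝ := fun s₂ =>
    (if s₂ < s₁ then s₁ + exp (-a * (s₁ - s₂)) / a else s₂ + 1 / a) * (μ * exp (-μ * s₂))
    with hf
  have eIoc : EqOn f (fun s₂ => (s₁ + exp (-a * (s₁ - s₂)) / a) * (μ * exp (-μ * s₂)))
      (Ioc 0 s₁) := by
    intro s₂ hs₂
    rcases lt_or_eq_of_le hs₂.2 with hlt | heq
    · simp only [hf, if_pos hlt]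
    · simp only [hf, heq, if_neg (lt_irrefl s₁), sub_self, mul_zero, Real.exp_zero]
  have eIoi : EqOn f (fun s₂ => (μ / a + μ * s₂) * exp (-μ * s₂)) (Ioi s₁) := by
    intro s₂ hs₂
    have : ¬ s₂ < s₁ := not_lt.mpr (le_of_lt hs₂.out)
    simp only [hf, if_neg this]
    ring
  have hIoc : IntegrableOn f (Ioc 0 s₁) := by
    apply IntegrableOn.congr_fun _ eIoc.symm measurableSet_Ioc
    apply Continuous.integrableOn_Ioc
    fun_prop
  have hIoi : IntegrableOn f (Ioi s₁) := by
    apply (integrableOn_Ioi_linexp μ (μ / a) μ s₁ hμ hs₁.le (by positivity) hμ.le).congr_fun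
      eIoi.symm measurableSet_Ioi
  rw [← Ioc_union_Ioi_eq_Ioi hs₁.le,
    setIntegral_union Ioc_disjoint_Ioi_same
      measurableSet_Ioi hIoc hIoi]
  have h1 : ∫ s₂ in Ioc (0 : ℝ) s₁, f s₂
      = -s₁ * exp (-μ * s₁) + μ / (a * (a - μ)) * exp (-μ * s₁)
        + s₁ - μ / (a * (a - μ)) * exp (-a * s₁) := by
    rw [setIntegral_congr_fun measurableSet_Ioc eIoc, ← intervalIntegral.integral_of_le hs₁.le]
    have hd : ∀ x ∈ uIcc (0 : ℝ) s₁,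
        HasDerivAt (fun s₂ : ℝ => (-s₁) * exp (-μ * s₂)
            + (μ / (a * (a - μ))) * exp (-a * s₁) * exp ((a - μ) * s₂))
          ((s₁ + exp (-a * (s₁ - x)) / a) * (μ * exp (-μ * x))) x := by
      intro x _
      have h1 := hasDerivAt_cexp (-s₁) (-μ) x
      have h2 := hasDerivAt_cexp ((μ / (a * (a - μ))) * exp (-a * s₁)) (a - μ) x
      have := h1.add h2
      convert this using 1
      all_goals try rfl
      have e3 : exp (-a * (s₁ - x)) * exp (-μ * x) = exp (-a * s₁) * exp ((a - μ) * x) := by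
        rw [← exp_add, ← exp_add]
        congr 1
        ring
      rw [show (s₁ + exp (-a * (s₁ - x)) / a) * (μ * exp (-μ * x))
          = s₁ * μ * exp (-μ * x) + (μ / a) * (exp (-a * (s₁ - x)) * exp (-μ * x)) from by ring,
        e3]
      field_simp
    rw [intervalIntegral.integral_eq_sub_of_hasDerivAt hd
      ((by fun_prop : Continuous fun s₂ : ℝ =>
        (s₁ + exp (-a * (s₁ - s₂)) / a) * (μ * exp (-μ * s₂))).intervalIntegrable _ _)]
    have e4 : exp (-a * s₁) * exp ((a - μ) * s₁) = exp (-μ * s₁) := by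
      rw [← exp_add]
      congr 1
      ring
    simp only [mul_zero, Real.exp_zero, mul_one, mul_assoc, e4]
    ring
  have h2 : ∫ s₂ in Ioi s₁, f s₂
      = ((μ / a + μ * s₁) / μ + μ / μ ^ 2) * exp (-μ * s₁) := by
    rw [setIntegral_congr_fun measurableSet_Ioi eIoi]
    exact integral_Ioi_linexp μ (μ / a) μ s₁ hμ hs₁.le (by positivity) hμ.le
  rw [h1, h2]
  field_simp
  ring

private lemma outer_int (μ a : ℝ) (hμ : 0 < μ) (hma : μ < a) :
    ∫ s₁ in Ioi (0 : ℝ),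
        (s₁ + (1 / μ + 1 / a + μ / (a * (a - μ))) * exp (-μ * s₁)
          - μ / (a * (a - μ)) * exp (-a * s₁)) * (μ * exp (-μ * s₁))
      = 1 / μ + (1 / μ + 1 / a + μ / (a * (a - μ))) / 2 - μ / (a * (a - μ)) * μ / (a + μ) := by
  have ha : 0 < a := hμ.trans hma
  have ha' : a ≠ 0 := ne_of_gt ha
  have hμ' : μ ≠ 0 := ne_of_gt hμ
  have ham : 0 < a - μ := sub_pos.mpr hma
  have ham' : a - μ ≠ 0 := ne_of_gt ham
  have haμ : 0 < a + μ := by linarith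
  set B : ℝ := 1 / μ + 1 / a + μ / (a * (a - μ)) with hB
  set K : ℝ := μ / (a * (a - μ)) with hK
  have hK0 : 0 ≤ K := by rw [hK]; positivity
  have hB0 : 0 ≤ B := by rw [hB]; positivity
  have e : (fun s₁ : ℝ => (s₁ + B * exp (-μ * s₁) - K * exp (-a * s₁)) * (μ * exp (-μ * s₁)))
      = fun s₁ : ℝ => ((0 + μ * s₁) * exp (-μ * s₁) + (B * μ + 0 * s₁) * exp (-(2 * μ) * s₁))
        - (K * μ + 0 * s₁) * exp (-(a + μ) * s₁) := by
    funext s₁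
    have e1 : exp (-μ * s₁) * exp (-μ * s₁) = exp (-(2 * μ) * s₁) := by
      rw [← exp_add]; congr 1; ring
    have e2 : exp (-a * s₁) * exp (-μ * s₁) = exp (-(a + μ) * s₁) := by
      rw [← exp_add]; congr 1; ring
    rw [← e1, ← e2]
    ring
  rw [e, integral_sub, integral_add]
  · rw [integral_Ioi_linexp μ 0 μ 0 hμ le_rfl le_rfl hμ.le,
      integral_Ioi_linexp (2 * μ) (B * μ) 0 0 (by positivity) le_rfl (by positivity) le_rfl,
      integral_Ioi_linexp (a + μ) (K * μ) 0 0 haμ le_rfl (by positivity) le_rfl]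
    simp only [mul_zero, add_zero, Real.exp_zero, mul_one, zero_add, zero_div]
    field_simp
  · exact integrableOn_Ioi_linexp μ 0 μ 0 hμ le_rfl le_rfl hμ.le
  · exact integrableOn_Ioi_linexp (2 * μ) (B * μ) 0 0 (by positivity) le_rfl (by positivity) le_rfl
  · apply Integrable.add
    · exact integrableOn_Ioi_linexp μ 0 μ 0 hμ le_rfl le_rfl hμ.le
    · exact integrableOn_Ioi_linexp (2 * μ) (B * μ) 0 0 (by positivity) le_rfl (by positivity)
        le_rfl
  · exact integrableOn_Ioi_linexp (a + μ) (K * μ) 0 0 haμ le_rfl (by positivity) le_rfl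

/-- Expected value of max(S₁, S₂+τ) for independent S₁,S₂ ~ Exp(μ), τ ~ Exp((2r-1)μ),
    written as an integral against the joint density. -/
theorem expect_max_service (r : ℕ) (hr : 2 ≤ r) (μ : ℝ) (hμ : 0 < μ) :
    (∫ s₁ in Ioi (0 : ℝ), ∫ s₂ in Ioi (0 : ℝ), ∫ τ in Ioi (0 : ℝ),
        max s₁ (s₂ + τ) * (μ * exp (-μ * s₁)) * (μ * exp (-μ * s₂)) *
          ((2 * r - 1) * μ * exp (-((2 * r - 1) * μ) * τ))) =
      1 / μ + (2 * (r : ℝ) - 1) / (2 * r - 2) * (1 / (2 * μ))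
        - 1 / ((2 * (r : ℝ) - 2) * (2 * r - 1) * (2 * r) * μ) := by
  have hr' : (2 : ℝ) ≤ (r : ℝ) := by exact_mod_cast hr
  set a : ℝ := (2 * (r : ℝ) - 1) * μ with ha_def
  have hma : μ < a := by rw [ha_def]; nlinarith
  have ha : 0 < a := hμ.trans hma
  have main1 : ∀ s₁ ∈ Ioi (0 : ℝ),
      (∫ s₂ in Ioi (0 : ℝ), ∫ τ in Ioi (0 : ℝ),
        max s₁ (s₂ + τ) * (μ * exp (-μ * s₁)) * (μ * exp (-μ * s₂)) * (a * exp (-a * τ)))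
      = (s₁ + (1 / μ + 1 / a + μ / (a * (a - μ))) * exp (-μ * s₁)
          - μ / (a * (a - μ)) * exp (-a * s₁)) * (μ * exp (-μ * s₁)) := by
    intro s₁ hs₁
    have inner_eq : EqOn
        (fun s₂ => ∫ τ in Ioi (0 : ℝ),
          max s₁ (s₂ + τ) * (μ * exp (-μ * s₁)) * (μ * exp (-μ * s₂)) * (a * exp (-a * τ)))
        (fun s₂ =>
          (if s₂ < s₁ then s₁ + exp (-a * (s₁ - s₂)) / a else s₂ + 1 / a) * (μ * exp (-μ * s₂))
            * (μ * exp (-μ * s₁)))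
        (Ioi (0 : ℝ)) := by
      intro s₂ hs₂
      have : (fun τ => max s₁ (s₂ + τ) * (μ * exp (-μ * s₁)) * (μ * exp (-μ * s₂))
            * (a * exp (-a * τ)))
          = fun τ => (μ * exp (-μ * s₁) * (μ * exp (-μ * s₂)))
            * (max s₁ (s₂ + τ) * (a * exp (-a * τ))) := funext fun τ => by ring
      simp only [this]
      rw [integral_const_mul, inner_int a ha s₁ s₂ hs₁.out hs₂.out]
      ring
    rw [setIntegral_congr_fun measurableSet_Ioi inner_eq]
    have : (fun s₂ =>
        (if s₂ < s₁ then s₁ + exp (-a * (s₁ - s₂)) / a else s₂ + 1 / a) * (μ * exp (-μ * s₂))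
          * (μ * exp (-μ * s₁)))
        = fun s₂ => (μ * exp (-μ * s₁)) *
          ((if s₂ < s₁ then s₁ + exp (-a * (s₁ - s₂)) / a else s₂ + 1 / a)
            * (μ * exp (-μ * s₂))) := funext fun s₂ => by ring
    rw [this, integral_const_mul, middle_int μ a hμ hma s₁ hs₁.out]
    ring
  rw [setIntegral_congr_fun measurableSet_Ioi main1, outer_int μ a hμ hma]
  rw [ha_def]
  have h1 : (2 * (r : ℝ) - 1) ≠ 0 := by linarith
  have h2 : (2 * (r : ℝ) - 2) ≠ 0 := by linarith
  have h3 : (r : ℝ) ≠ 0 := by linarith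
  have hμ' : μ ≠ 0 := ne_of_gt hμ
  have h4 : (2 * (r : ℝ) - 1) * μ - μ ≠ 0 := by
    have : (2 * (r : ℝ) - 1) * μ - μ = (2 * (r : ℝ) - 2) * μ := by ring
    rw [this]
    exact mul_ne_zero h2 hμ'
  have h5 : (2 * (r : ℝ) - 1) * μ + μ ≠ 0 := by nlinarith
  have h6 : 2 * (r : ℝ) - 1 - 1 ≠ 0 := by linarith
  have h7 : (r : ℝ) - 1 ≠ 0 := by linarith
  field_simp
  ring
end

section
/- Let S₁, S₂ ~ Exp(μ) and τ ~ Exp((2r-1)μ) be independent, with μ > 0 and integer r ≥ 2. Then E[max(S₁, S₂+τ)] − (E[S₁] + E[S₂+τ])/2 = ((2r-1)/(2r-2))·(1/(2μ)) − 1/((2r-2)(2r-1)·2rμ) − 1/(2(2r-1)μ). -/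
open Real MeasureTheory Set Filter Topology

lemma tendsto_xexp (b : ℝ) (hb : 0 < b) :
    Tendsto (fun x : ℝ => x * exp (-(b * x))) atTop (𝓝 0) := by
  have h := (tendsto_pow_mul_exp_neg_atTop_nhds_zero 1).comp
    (tendsto_id.const_mul_atTop hb)
  have := h.const_mul (1 / b)
  rw [mul_zero] at this
  refine this.congr fun x => ?_
  simp only [Function.comp]
  field_simp
  ring_nf
  simp [mul_comm]

lemma exp_Ioi (b a : ℝ) (hb : 0 < b) :
    ∫ x in Ioi a, exp (-(b * x)) = exp (-(b * a)) / b := by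
  have hderiv : ∀ x ∈ Ici a, HasDerivAt (fun x => -exp (-(b * x)) / b) (exp (-(b * x))) x := by
    intro x _
    have : HasDerivAt (fun x : ℝ => -(b * x)) (-b) x := by
      exact ((hasDerivAt_id x).const_mul b).neg.congr_deriv (by simp)
    have := (this.exp.neg).div_const b
    exact this.congr_deriv (by field_simp)
  have htend : Tendsto (fun x => -exp (-(b * x)) / b) atTop (𝓝 0) := by
    have h := (tendsto_exp_neg_atTop_nhds_zero.comp (tendsto_id.const_mul_atTop hb)).neg.div_const b
    simpa using h
  have := integral_Ioi_of_hasDerivAt_of_nonneg' hderiv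
    (fun x _ => (exp_pos _).le) htend
  rw [this]; ring

lemma exp_IntOn (b a : ℝ) (hb : 0 < b) :
    IntegrableOn (fun x => exp (-(b * x))) (Ioi a) := by
  simpa [neg_mul] using exp_neg_integrableOn_Ioi a hb

lemma xexp_deriv (b : ℝ) (hb : 0 < b) : ∀ x ∈ Ici (0:ℝ),
    HasDerivAt (fun x => -((x / b + 1 / b ^ 2) * exp (-(b * x)))) (x * exp (-(b * x))) x := by
  intro x _
  have h1 : HasDerivAt (fun x : ℝ => x / b + 1 / b ^ 2) (1 / b) x := by
    have := ((hasDerivAt_id x).div_const b).add_const (1 / b ^ 2)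
    simpa [one_div] using this
  have h2 : HasDerivAt (fun x : ℝ => exp (-(b * x))) (-b * exp (-(b * x))) x := by
    have : HasDerivAt (fun x : ℝ => -(b * x)) (-b) x := by
      exact ((hasDerivAt_id x).const_mul b).neg.congr_deriv (by simp)
    simpa [mul_comm] using this.exp
  have := (h1.mul h2).neg
  refine this.congr_deriv ?_
  field_simp
  ring

lemma xexp_tendsto (b : ℝ) (hb : 0 < b) :
    Tendsto (fun x => -((x / b + 1 / b ^ 2) * exp (-(b * x)))) atTop (𝓝 0) := by
  have h1 := (tendsto_xexp b hb).const_mul (1 / b)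
  have h2 := (tendsto_exp_neg_atTop_nhds_zero.comp (tendsto_id.const_mul_atTop hb)).const_mul (1 / b ^ 2)
  have := (h1.add h2).neg
  simp only [mul_zero, add_zero, neg_zero] at this
  refine this.congr fun x => ?_
  simp only [Function.comp, id]
  ring

lemma xexp_Ioi (b a : ℝ) (hb : 0 < b) (ha : 0 ≤ a) :
    ∫ x in Ioi a, x * exp (-(b * x)) = (a / b + 1 / b ^ 2) * exp (-(b * a)) := by
  have := integral_Ioi_of_hasDerivAt_of_nonneg'
    (fun x hx => xexp_deriv b hb x (le_trans ha hx))
    (fun x hx => mul_nonneg (le_trans ha (le_of_lt hx)) (exp_pos _).le)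
    (xexp_tendsto b hb)
  rw [this]; ring

lemma xexp_IntOn (b a : ℝ) (hb : 0 < b) (ha : 0 ≤ a) :
    IntegrableOn (fun x => x * exp (-(b * x))) (Ioi a) :=
  integrableOn_Ioi_deriv_of_nonneg'
    (fun x hx => xexp_deriv b hb x (le_trans ha hx))
    (fun x hx => mul_nonneg (le_trans ha (le_of_lt hx)) (exp_pos _).le)
    (xexp_tendsto b hb)

lemma exp_hasDeriv (b : ℝ) (hb : b ≠ 0) (x : ℝ) :
    HasDerivAt (fun x => -exp (-(b * x)) / b) (exp (-(b * x))) x := by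
  have : HasDerivAt (fun x : ℝ => -(b * x)) (-b) x := by
    exact ((hasDerivAt_id x).const_mul b).neg.congr_deriv (by simp)
  have := (this.exp.neg).div_const b
  exact this.congr_deriv (by field_simp)

lemma exp_Ioc (b : ℝ) (hb : b ≠ 0) (u v : ℝ) (huv : u ≤ v) :
    ∫ x in Ioc u v, exp (-(b * x)) = (exp (-(b * u)) - exp (-(b * v))) / b := by
  rw [← intervalIntegral.integral_of_le huv,
    intervalIntegral.integral_eq_sub_of_hasDerivAt (fun x _ => exp_hasDeriv b hb x)
      (Continuous.intervalIntegrable (by fun_prop) _ _)]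
  ring

lemma max_cont (b c : ℝ) : Continuous fun τ : ℝ => max c τ * (b * exp (-(b * τ))) := by
  fun_prop

lemma max_exp_IntOn (b : ℝ) (hb : 0 < b) (c : ℝ) :
    IntegrableOn (fun τ => max c τ * (b * exp (-(b * τ)))) (Ioi 0) := by
  have hbound : Integrable (fun τ => (|c| * b) * exp (-(b * τ)) + b * (τ * exp (-(b * τ))))
      (volume.restrict (Ioi (0:ℝ))) :=
    ((exp_IntOn b 0 hb).const_mul _).add ((xexp_IntOn b 0 hb le_rfl).const_mul b)
  refine Integrable.mono' hbound ((max_cont b c).aestronglyMeasurable) ?_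
  filter_upwards [ae_restrict_mem measurableSet_Ioi] with τ hτ
  have hτ0 : (0:ℝ) < τ := hτ
  have h1 : |max c τ| ≤ |c| + τ := by
    rcases le_total c τ with h | h
    · rw [max_eq_right h, abs_of_pos hτ0]; linarith [abs_nonneg c]
    · rw [max_eq_left h]; linarith
  have hpos : (0:ℝ) < b * exp (-(b * τ)) := by positivity
  have hn : ‖max c τ * (b * exp (-(b * τ)))‖ = |max c τ| * (b * exp (-(b * τ))) := by
    rw [norm_mul, Real.norm_eq_abs, Real.norm_eq_abs, abs_of_pos hpos]
  rw [hn]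
  nlinarith [mul_le_mul_of_nonneg_right h1 hpos.le]

lemma max_exp_Ioi (b : ℝ) (hb : 0 < b) (c : ℝ) :
    ∫ τ in Ioi 0, max c τ * (b * exp (-(b * τ)))
      = max c 0 + exp (-(b * max c 0)) / b := by
  rcases le_or_gt c 0 with hc | hc
  · rw [max_eq_right hc]
    have heq : ∀ τ ∈ Ioi (0:ℝ), max c τ * (b * exp (-(b * τ))) = b * (τ * exp (-(b * τ))) := by
      intro τ hτ
      rw [max_eq_right (le_trans hc (le_of_lt hτ))]; ring
    rw [setIntegral_congr_fun measurableSet_Ioi heq, integral_const_mul,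
      xexp_Ioi b 0 hb le_rfl]
    field_simp
    ring
  · rw [max_eq_left hc.le]
    rw [← Ioc_union_Ioi_eq_Ioi hc.le,
      setIntegral_union (Ioc_disjoint_Ioi le_rfl) measurableSet_Ioi
        ((max_cont b c).integrableOn_Ioc)
        (((max_exp_IntOn b hb c)).mono_set (Ioi_subset_Ioi hc.le))]
    have h1 : ∀ τ ∈ Ioc (0:ℝ) c, max c τ * (b * exp (-(b * τ)))
        = (c * b) * exp (-(b * τ)) := by
      intro τ hτ
      rw [max_eq_left hτ.2]; ring
    have h2 : ∀ τ ∈ Ioi c, max c τ * (b * exp (-(b * τ)))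
        = b * (τ * exp (-(b * τ))) := by
      intro τ hτ
      rw [max_eq_right (le_of_lt hτ)]; ring
    rw [setIntegral_congr_fun measurableSet_Ioc h1, setIntegral_congr_fun measurableSet_Ioi h2,
      integral_const_mul, integral_const_mul, exp_Ioc b hb.ne' 0 c hc.le,
      xexp_Ioi b c hb hc.le]
    field_simp
    simp only [mul_zero, neg_zero, exp_zero]
    ring

lemma lemA (b : ℝ) (hb : 0 < b) (s₁ s₂ : ℝ) :
    ∫ τ in Ioi 0, max s₁ (s₂ + τ) * (b * exp (-(b * τ)))
      = max s₁ s₂ + exp (-(b * max (s₁ - s₂) 0)) / b := by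
  have hmax : ∀ τ : ℝ, max s₁ (s₂ + τ) = s₂ + max (s₁ - s₂) τ := by
    intro τ
    rcases le_total s₁ (s₂ + τ) with h | h
    · rw [max_eq_right h, max_eq_right (by linarith)]
    · rw [max_eq_left h, max_eq_left (by linarith)]; ring
  have heq : ∀ τ : ℝ, max s₁ (s₂ + τ) * (b * exp (-(b * τ)))
      = (s₂ * b) * exp (-(b * τ)) + max (s₁ - s₂) τ * (b * exp (-(b * τ))) := by
    intro τ; rw [hmax τ]; ring
  simp_rw [heq]
  rw [integral_add ((exp_IntOn b 0 hb).const_mul _) (max_exp_IntOn b hb _),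
    integral_const_mul, exp_Ioi b 0 hb, max_exp_Ioi b hb]
  have h0 : max s₁ s₂ = s₂ + max (s₁ - s₂) 0 := by simpa using hmax 0
  rw [h0]
  rw [mul_zero, neg_zero, exp_zero]
  field_simp
  ring

lemma K_IntOn (l m t : ℝ) (hl : 0 < l) (hm : 0 < m) :
    IntegrableOn (fun s => exp (-(l * max (t - s) 0)) * (m * exp (-(m * s)))) (Ioi 0) := by
  refine Integrable.mono' ((exp_IntOn m 0 hm).const_mul m) (Continuous.aestronglyMeasurable (by fun_prop)) ?_
  filter_upwards with s
  have h1 : exp (-(l * max (t - s) 0)) ≤ 1 := by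
    rw [exp_le_one_iff]
    have : 0 ≤ max (t - s) 0 := le_max_right _ _
    nlinarith
  have h2 : (0:ℝ) < m * exp (-(m * s)) := by positivity
  rw [norm_mul, Real.norm_eq_abs, Real.norm_eq_abs, abs_of_pos (exp_pos _), abs_of_pos h2]
  nlinarith [exp_pos (-(l * max (t - s) 0))]

lemma lemK (l m : ℝ) (hl : 0 < l) (hm : 0 < m) (hne : m ≠ l) (t : ℝ) (ht : 0 ≤ t) :
    ∫ s in Ioi 0, exp (-(l * max (t - s) 0)) * (m * exp (-(m * s)))
      = m / (l - m) * (exp (-(m * t)) - exp (-(l * t))) + exp (-(m * t)) := by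
  rw [← Ioc_union_Ioi_eq_Ioi ht,
    setIntegral_union (Ioc_disjoint_Ioi le_rfl) measurableSet_Ioi
      ((K_IntOn l m t hl hm).mono_set Ioc_subset_Ioi_self)
      ((K_IntOn l m t hl hm).mono_set (Ioi_subset_Ioi ht))]
  have h1 : ∀ s ∈ Ioc (0:ℝ) t, exp (-(l * max (t - s) 0)) * (m * exp (-(m * s)))
      = (m * exp (-(l * t))) * exp (-((m - l) * s)) := by
    intro s hs
    rw [max_eq_left (by linarith [hs.2])]
    rw [show (m * exp (-(l * t))) * exp (-((m - l) * s))
        = m * (exp (-(l * t)) * exp (-((m - l) * s))) from by ring, ← exp_add]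
    rw [show -(l * t) + -((m - l) * s) = -(l * (t - s)) + -(m * s) from by ring, exp_add]
    ring
  have h2 : ∀ s ∈ Ioi t, exp (-(l * max (t - s) 0)) * (m * exp (-(m * s)))
      = m * exp (-(m * s)) := by
    intro s hs
    rw [max_eq_right (by simp at hs; linarith), mul_zero, neg_zero, exp_zero, one_mul]
  rw [setIntegral_congr_fun measurableSet_Ioc h1, setIntegral_congr_fun measurableSet_Ioi h2,
    integral_const_mul, integral_const_mul,
    exp_Ioc (m - l) (sub_ne_zero.2 hne) 0 t ht, exp_Ioi m t hm]
  have e3 : exp (-(l * t)) * exp (-((m - l) * t)) = exp (-(m * t)) := by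
    rw [← exp_add]; congr 1; ring
  rw [mul_zero, neg_zero, exp_zero]
  have hml : m - l ≠ 0 := sub_ne_zero.2 hne
  have hlm : l - m ≠ 0 := sub_ne_zero.2 (Ne.symm hne)
  field_simp
  rw [mul_comm t (m - l)]
  linear_combination (m * (m - l)) * e3

lemma lemJ (l m : ℝ) (hl : 0 < l) (hm : 0 < m) (hne : m ≠ l) (t : ℝ) (ht : 0 ≤ t) :
    ∫ s in Ioi 0, (max t s + exp (-(l * max (t - s) 0)) / l) * (m * exp (-(m * s)))
      = t + exp (-(m * t)) / m
        + (1 / l) * (m / (l - m) * (exp (-(m * t)) - exp (-(l * t))) + exp (-(m * t))) := by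
  have heq : ∀ s : ℝ, (max t s + exp (-(l * max (t - s) 0)) / l) * (m * exp (-(m * s)))
      = max t s * (m * exp (-(m * s)))
        + (1 / l) * (exp (-(l * max (t - s) 0)) * (m * exp (-(m * s)))) := by
    intro s; field_simp
  simp_rw [heq]
  rw [integral_add (max_exp_IntOn m hm t) ((K_IntOn l m t hl hm).const_mul _),
    integral_const_mul, max_exp_Ioi m hm t, lemK l m hl hm hne t ht, max_eq_left ht]

lemma stepC (l m : ℝ) (hl : 0 < l) (hm : 0 < m) (hne : m ≠ l) :
    ∫ t in Ioi (0:ℝ), m * exp (-(m * t)) *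
        (t + exp (-(m * t)) / m
          + (1 / l) * (m / (l - m) * (exp (-(m * t)) - exp (-(l * t))) + exp (-(m * t))))
      = 1 / m + 1 / (2 * m) + m / (2 * l * (l + m)) + 1 / (2 * l) := by
  have hlm : l - m ≠ 0 := sub_ne_zero.2 (Ne.symm hne)
  have heq : ∀ t : ℝ, m * exp (-(m * t)) *
        (t + exp (-(m * t)) / m
          + (1 / l) * (m / (l - m) * (exp (-(m * t)) - exp (-(l * t))) + exp (-(m * t))))
      = m * (t * exp (-(m * t)))
        + (1 + m ^ 2 / (l * (l - m)) + m / l) * exp (-((m + m) * t))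
        + (-(m ^ 2 / (l * (l - m)))) * exp (-((l + m) * t)) := by
    intro t
    have e1 : exp (-((m + m) * t)) = exp (-(m * t)) * exp (-(m * t)) := by
      rw [← exp_add]; congr 1; ring
    have e2 : exp (-((l + m) * t)) = exp (-(l * t)) * exp (-(m * t)) := by
      rw [← exp_add]; congr 1; ring
    rw [e1, e2]
    field_simp
    ring
  simp_rw [heq]
  have i1 : Integrable (fun t => m * (t * exp (-(m * t)))) (volume.restrict (Ioi (0:ℝ))) :=
    (xexp_IntOn m 0 hm le_rfl).const_mul m
  have i2 : Integrable (fun t => (1 + m ^ 2 / (l * (l - m)) + m / l) * exp (-((m + m) * t)))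
      (volume.restrict (Ioi (0:ℝ))) := (exp_IntOn (m + m) 0 (by linarith)).const_mul _
  have i3 : Integrable (fun t => (-(m ^ 2 / (l * (l - m)))) * exp (-((l + m) * t)))
      (volume.restrict (Ioi (0:ℝ))) := (exp_IntOn (l + m) 0 (by linarith)).const_mul _
  have i12 : Integrable (fun t => m * (t * exp (-(m * t)))
      + (1 + m ^ 2 / (l * (l - m)) + m / l) * exp (-((m + m) * t)))
      (volume.restrict (Ioi (0:ℝ))) := i1.add i2
  rw [integral_add i12 i3, integral_add i1 i2,
    integral_const_mul, integral_const_mul, integral_const_mul,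
    xexp_Ioi m 0 hm le_rfl, exp_Ioi (m + m) 0 (by linarith), exp_Ioi (l + m) 0 (by linarith)]
  simp only [mul_zero, neg_zero, exp_zero]
  field_simp
  ring

lemma triple (l m : ℝ) (hl : 0 < l) (hm : 0 < m) (hne : m ≠ l) :
    ∫ s₁ in Ioi (0:ℝ), ∫ s₂ in Ioi (0:ℝ), ∫ τ in Ioi (0:ℝ),
        max s₁ (s₂ + τ) * (m * exp (-(m * s₁))) * (m * exp (-(m * s₂))) * (l * exp (-(l * τ)))
      = 1 / m + 1 / (2 * m) + m / (2 * l * (l + m)) + 1 / (2 * l) := by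
  have h1 : ∀ s₁ s₂ : ℝ, ∫ τ in Ioi (0:ℝ),
        max s₁ (s₂ + τ) * (m * exp (-(m * s₁))) * (m * exp (-(m * s₂))) * (l * exp (-(l * τ)))
      = (m * exp (-(m * s₁)))
        * ((max s₁ s₂ + exp (-(l * max (s₁ - s₂) 0)) / l) * (m * exp (-(m * s₂)))) := by
    intro s₁ s₂
    have hre : ∀ τ : ℝ,
        max s₁ (s₂ + τ) * (m * exp (-(m * s₁))) * (m * exp (-(m * s₂))) * (l * exp (-(l * τ)))
        = ((m * exp (-(m * s₁))) * (m * exp (-(m * s₂))))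
            * (max s₁ (s₂ + τ) * (l * exp (-(l * τ)))) := fun τ => by ring
    simp_rw [hre]
    rw [integral_const_mul, lemA l hl s₁ s₂]
    ring
  simp_rw [h1]
  have h2 : ∀ s₁ ∈ Ioi (0:ℝ), ∫ s₂ in Ioi (0:ℝ), (m * exp (-(m * s₁)))
        * ((max s₁ s₂ + exp (-(l * max (s₁ - s₂) 0)) / l) * (m * exp (-(m * s₂))))
      = m * exp (-(m * s₁)) * (s₁ + exp (-(m * s₁)) / m
          + (1 / l) * (m / (l - m) * (exp (-(m * s₁)) - exp (-(l * s₁))) + exp (-(m * s₁)))) := by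
    intro t ht
    rw [integral_const_mul, lemJ l m hl hm hne t (le_of_lt ht)]
  rw [setIntegral_congr_fun measurableSet_Ioi h2]
  exact stepC l m hl hm hne

lemma bracket1 (m : ℝ) (hm : 0 < m) :
    ∫ s in Ioi (0:ℝ), s * (m * exp (-(m * s))) = 1 / m := by
  have heq : ∀ s : ℝ, s * (m * exp (-(m * s))) = m * (s * exp (-(m * s))) := fun s => by ring
  simp_rw [heq]
  rw [integral_const_mul, xexp_Ioi m 0 hm le_rfl]
  rw [mul_zero, neg_zero, exp_zero]
  field_simp
  ring

lemma bracket2 (l m : ℝ) (hl : 0 < l) (hm : 0 < m) :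
    ∫ s in Ioi (0:ℝ), ∫ τ in Ioi (0:ℝ),
        (s + τ) * (m * exp (-(m * s))) * (l * exp (-(l * τ))) = 1 / m + 1 / l := by
  have h1 : ∀ s : ℝ, ∫ τ in Ioi (0:ℝ), (s + τ) * (m * exp (-(m * s))) * (l * exp (-(l * τ)))
      = (m * exp (-(m * s))) * (s + 1 / l) := by
    intro s
    have hre : ∀ τ : ℝ, (s + τ) * (m * exp (-(m * s))) * (l * exp (-(l * τ)))
        = (s * l * (m * exp (-(m * s)))) * exp (-(l * τ))
          + (l * (m * exp (-(m * s)))) * (τ * exp (-(l * τ))) := fun τ => by ring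
    simp_rw [hre]
    rw [integral_add ((exp_IntOn l 0 hl).const_mul _) ((xexp_IntOn l 0 hl le_rfl).const_mul _),
      integral_const_mul, integral_const_mul, exp_Ioi l 0 hl, xexp_Ioi l 0 hl le_rfl]
    rw [mul_zero, neg_zero, exp_zero]
    field_simp
    ring
  simp_rw [h1]
  have hre2 : ∀ s : ℝ, (m * exp (-(m * s))) * (s + 1 / l)
      = m * (s * exp (-(m * s))) + (m / l) * exp (-(m * s)) := fun s => by field_simp
  simp_rw [hre2]
  rw [integral_add ((xexp_IntOn m 0 hm le_rfl).const_mul _) ((exp_IntOn m 0 hm).const_mul _),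
    integral_const_mul, integral_const_mul, exp_Ioi m 0 hm, xexp_Ioi m 0 hm le_rfl]
  rw [mul_zero, neg_zero, exp_zero]
  field_simp
  ring

/-- Difference between average request delay and average packet delay under BoS:
    E[max(S₁, S₂+τ)] − (E[S₁] + E[S₂+τ])/2. -/
theorem request_minus_packet_delay (r : ℕ) (hr : 2 ≤ r) (μ : ℝ) (hμ : 0 < μ) :
    (∫ s₁ in Ioi (0 : ℝ), ∫ s₂ in Ioi (0 : ℝ), ∫ τ in Ioi (0 : ℝ),
        max s₁ (s₂ + τ) * (μ * exp (-μ * s₁)) * (μ * exp (-μ * s₂)) *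
          ((2 * r - 1) * μ * exp (-((2 * r - 1) * μ) * τ)))
      - ((∫ s₁ in Ioi (0 : ℝ), s₁ * (μ * exp (-μ * s₁)))
          + (∫ s₂ in Ioi (0 : ℝ), ∫ τ in Ioi (0 : ℝ),
              (s₂ + τ) * (μ * exp (-μ * s₂)) *
                ((2 * r - 1) * μ * exp (-((2 * r - 1) * μ) * τ)))) / 2 =
      (2 * (r : ℝ) - 1) / (2 * r - 2) * (1 / (2 * μ))
        - 1 / ((2 * (r : ℝ) - 2) * (2 * r - 1) * (2 * r) * μ)
        - 1 / (2 * (2 * (r : ℝ) - 1) * μ) := by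
  have hx : (2:ℝ) ≤ (r : ℝ) := by exact_mod_cast hr
  set l : ℝ := (2 * (r:ℝ) - 1) * μ with hldef
  have hl : 0 < l := by
    have : (0:ℝ) < 2 * (r:ℝ) - 1 := by linarith
    positivity
  have hne : μ ≠ l := by
    rw [hldef]
    intro h
    have : (2 * (r:ℝ) - 1) = 1 := by
      field_simp at h
      nlinarith [h]
    linarith
  simp only [neg_mul]
  rw [triple l μ hl hμ hne, bracket1 μ hμ, bracket2 l μ hl hμ]
  rw [hldef]
  have h1 : 2 * (r:ℝ) - 1 ≠ 0 := by linarith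
  have h2 : 2 * (r:ℝ) - 2 ≠ 0 := by linarith
  have h3 : (r:ℝ) ≠ 0 := by linarith
  have h4 : (r:ℝ) - 1 ≠ 0 := by linarith
  field_simp
  ring
end
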